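/- The Lie algebra sl₂(ℂ) ⊕ ℂ is not symplectic: it admits no nondegenerate skew-symmetric bilinear form satisfying the 2-cocycle condition. -/

import Mathlib

/-- The Lie algebra `sl₂(ℂ) ⊕ ℂ` (basis `H,E,F,Z` with `[H,E] = 2E`, `[H,F] = -2F`,
`[E,F] = H` and `Z` central) is not symplectic: it admits no nondegenerate
skew-symmetric bilinear form satisfying the 2-cocycle condition. -/
theorem sl2_plus_C_not_symplectic (g : Type*) [LieRing g] [LieAlgebra ℂ g]
    (e : Module.Basis (Fin 4) ℂ g)
    (hHE : ⁅e 0, e 1⁆ = (2 : ℂ) • e 1)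
    (hHF : ⁅e 0, e 2⁆ = (-2 : ℂ) • e 2)
    (hEF : ⁅e 1, e 2⁆ = e 0)
    (hZ : ∀ i : Fin 4, ⁅e i, e 3⁆ = 0) :
    ¬ ∃ B : g →ₗ[ℂ] g →ₗ[ℂ] ℂ,
      (∀ x y : g, B x y = - B y x) ∧
      (∀ x y z : g, B ⁅x, y⁆ z - B x ⁅y, z⁆ + B y ⁅x, z⁆ = 0) ∧
      (∀ x : g, (∀ y : g, B x y = 0) → x = 0) := by
  rintro ⟨B, hskew, hcoc, hnd⟩
  -- e 3 is central
  have hcentral : ∀ x : g, ⁅x, e 3⁆ = 0 := by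
    intro x
    have had : (LieAlgebra.ad ℂ g (e 3)) = 0 := by
      apply e.ext
      intro i
      have := hZ i
      rw [← lie_skew] at this
      simp only [LieAlgebra.ad_apply, LinearMap.zero_apply]
      rw [← neg_eq_zero]
      simpa using this
    rw [← lie_skew, ← LieAlgebra.ad_apply ℂ, had]
    simp
  have hbr : ∀ x y : g, B ⁅x, y⁆ (e 3) = 0 := by
    intro x y
    have h := hcoc x y (e 3)
    rw [hcentral, hcentral] at h
    simpa using h
  have h0 : B (e 0) (e 3) = 0 := by rw [← hEF]; exact hbr _ _
  have h1 : B (e 1) (e 3) = 0 := by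
    have h := hbr (e 0) (e 1)
    rw [hHE] at h
    simp only [map_smul, LinearMap.smul_apply, smul_eq_mul] at h
    rcases mul_eq_zero.mp h with h | h
    · norm_num at h
    · exact h
  have h2 : B (e 2) (e 3) = 0 := by
    have h := hbr (e 0) (e 2)
    rw [hHF] at h
    simp only [map_smul, LinearMap.smul_apply, smul_eq_mul] at h
    rcases mul_eq_zero.mp h with h | h
    · norm_num at h
    · exact h
  have h3 : B (e 3) (e 3) = 0 := by
    have h := hskew (e 3) (e 3)
    linear_combination h / 2
  have hflip : ∀ z : g, B z (e 3) = 0 := by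
    intro z
    have hf : (B.flip (e 3)) = 0 := by
      apply e.ext
      intro i
      simp only [LinearMap.flip_apply, LinearMap.zero_apply]
      fin_cases i
      · exact h0
      · exact h1
      · exact h2
      · exact h3
    have := congrArg (fun f => f z) hf
    simpa using this
  have he3 : e 3 = 0 := by
    apply hnd
    intro y
    rw [hskew, hflip, neg_zero]
  exact e.ne_zero 3 he3
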